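/- If G is a tree on n ≥ 2 vertices, then the sum over all edges (u,v) of min(deg(u), deg(v)) is at most 2n − 4 when n ≥ 3 (more precisely, it equals at most 2(n−1) − Δ where Δ is the maximum degree). -/

import Mathlib

open Finset

/-- `minDeg G e` is the minimum of the degrees of the two endpoints of the edge `e`. -/
noncomputable def minDeg {V : Type*} [Fintype V] [DecidableEq V]
    (G : SimpleGraph V) [DecidableRel G.Adj] (e : Sym2 V) : ℕ :=
  Sym2.lift ⟨fun u v => min (G.degree u) (G.degree v), fun u v => min_comm _ _⟩ e

open SimpleGraph in
/-- In a tree, adjacent vertices are at different distances from any root. -/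
lemma tree_dist_adj_ne {V : Type*} {G : SimpleGraph V} (hG : G.IsTree) (r : V) {u v : V}
    (h : G.Adj u v) : G.dist r u ≠ G.dist r v := by
  classical
  intro heq
  obtain ⟨p, hp, hpl⟩ := hG.isConnected.exists_path_of_dist r u
  obtain ⟨q, hq, hql⟩ := hG.isConnected.exists_path_of_dist r v
  have hv : v ∉ p.support := by
    intro hv
    have h1 : G.dist r v ≤ (p.takeUntil v hv).length := dist_le _
    have h2 := p.length_takeUntil_le hv
    have h4 := congr_arg Walk.length (p.take_spec hv)
    rw [Walk.length_append] at h4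
    have h5 : (p.dropUntil v hv).length = 0 := by omega
    exact h.ne' (Walk.eq_of_length_eq_zero h5)
  have hp' : (p.concat h).IsPath := by
    rw [Walk.isPath_def, Walk.support_concat]
    have := hp.support_nodup
    simp [List.nodup_append, this, hv]
    exact fun a ha hav => hv (hav ▸ ha)
  have heqp := (hG.existsUnique_path r v).unique hp' hq
  have hl := congr_arg Walk.length heqp
  rw [Walk.length_concat] at hl
  omega

open SimpleGraph in
/-- In a tree, a vertex has a unique neighbour which is closer to the root. -/
lemma tree_parent_eq {V : Type*} {G : SimpleGraph V} (hG : G.IsTree) (r : V) {u₁ u₂ w : V}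
    (h1 : G.Adj u₁ w) (h2 : G.Adj u₂ w)
    (l1 : G.dist r u₁ < G.dist r w) (l2 : G.dist r u₂ < G.dist r w) : u₁ = u₂ := by
  classical
  obtain ⟨p1, hp1, hl1⟩ := hG.isConnected.exists_path_of_dist r u₁
  obtain ⟨p2, hp2, hl2⟩ := hG.isConnected.exists_path_of_dist r u₂
  have hw1 : w ∉ p1.support := by
    intro hw
    have hd := dist_le (p1.takeUntil w hw)
    have hle := p1.length_takeUntil_le hw
    omega
  have hw2 : w ∉ p2.support := by
    intro hw
    have hd := dist_le (p2.takeUntil w hw)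
    have hle := p2.length_takeUntil_le hw
    omega
  have hq1 : (p1.concat h1).IsPath := by
    rw [Walk.isPath_def, Walk.support_concat]
    have := hp1.support_nodup
    simp [List.nodup_append, this, hw1]
    exact fun a ha hav => hw1 (hav ▸ ha)
  have hq2 : (p2.concat h2).IsPath := by
    rw [Walk.isPath_def, Walk.support_concat]
    have := hp2.support_nodup
    simp [List.nodup_append, this, hw2]
    exact fun a ha hav => hw2 (hav ▸ ha)
  have heq := (hG.existsUnique_path r w).unique hq1 hq2
  have e1 : (p1.concat h1).reverse.getVert 1 = u₁ := by
    rw [Walk.reverse_concat, Walk.getVert_cons _ _ one_ne_zero, Nat.sub_self, Walk.getVert_zero]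
  have e2 : (p2.concat h2).reverse.getVert 1 = u₂ := by
    rw [Walk.reverse_concat, Walk.getVert_cons _ _ one_ne_zero, Nat.sub_self, Walk.getVert_zero]
  rw [heq] at e1
  exact e1.symm.trans e2

/-- If `G` is a tree on `n ≥ 2` vertices, then the sum over the edges of the minimum of the
endpoint degrees is at most `2(n-1) - Δ` where `Δ` is the maximum degree; in particular it is
at most `2n - 4` when `n ≥ 3`. -/
theorem tree_sum_min_degree_le {V : Type*} [Fintype V] [DecidableEq V]
    (G : SimpleGraph V) [DecidableRel G.Adj] (hG : G.IsTree)
    (n : ℕ) (hn : n = Fintype.card V) (h2 : 2 ≤ n) :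
    (∑ e ∈ G.edgeFinset, (minDeg G e : ℤ)) ≤ 2 * ((n : ℤ) - 1) - (G.maxDegree : ℤ) ∧
    (3 ≤ n → (∑ e ∈ G.edgeFinset, (minDeg G e : ℤ)) ≤ 2 * (n : ℤ) - 4) := by
  classical
  have hV : Nonempty V := Fintype.card_pos_iff.mp (by omega)
  obtain ⟨r, hr⟩ := G.exists_maximal_degree_vertex
  letI : LinearOrder V := LinearOrder.lift' (Fintype.equivFin V) (Fintype.equivFin V).injective
  set f : Sym2 V → V := Sym2.lift ⟨fun u v =>
      if G.dist r u < G.dist r v then v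
      else if G.dist r v < G.dist r u then u else max u v, by
    intro u v
    rcases lt_trichotomy (G.dist r u) (G.dist r v) with h | h | h
    · simp [h, asymm h]
    · simp [h, max_comm]
    · simp [h, asymm h]⟩ with hf
  have key : ∀ e ∈ G.edgeFinset,
      ∃ u v : V, e = s(u, v) ∧ G.Adj u v ∧ G.dist r u < G.dist r v ∧ f e = v := by
    intro e he
    induction e with
    | _ u v =>
      rw [SimpleGraph.mem_edgeFinset, SimpleGraph.mem_edgeSet] at he
      rcases (tree_dist_adj_ne hG r he).lt_or_gt with h | h
      · exact ⟨u, v, rfl, he, h, by simp [hf, h]⟩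
      · exact ⟨v, u, Sym2.eq_swap, he.symm, h, by simp [hf, h, asymm h]⟩
  have hmin : ∀ e ∈ G.edgeFinset, minDeg G e ≤ G.degree (f e) := by
    intro e he
    obtain ⟨u, v, rfl, hadj, hlt, hfe⟩ := key e he
    rw [hfe]
    simpa [minDeg] using min_le_right (G.degree u) (G.degree v)
  have hne : ∀ e ∈ G.edgeFinset, f e ≠ r := by
    intro e he
    obtain ⟨u, v, rfl, hadj, hlt, hfe⟩ := key e he
    rw [hfe]
    intro hvr
    rw [hvr] at hlt
    have h0 : G.dist r r = 0 := SimpleGraph.dist_self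
    omega
  have hinj : ∀ e1 ∈ G.edgeFinset, ∀ e2 ∈ G.edgeFinset, f e1 = f e2 → e1 = e2 := by
    intro e1 he1 e2 he2 hfe
    obtain ⟨u1, v1, rfl, h1, l1, q1⟩ := key e1 he1
    obtain ⟨u2, v2, rfl, h2, l2, q2⟩ := key e2 he2
    have hv : v1 = v2 := q1.symm.trans (hfe.trans q2)
    subst hv
    have hu : u1 = u2 := tree_parent_eq hG r h1 h2 l1 l2
    rw [hu]
  -- sum chain in ℕ
  have step1 : ∑ e ∈ G.edgeFinset, minDeg G e ≤ ∑ e ∈ G.edgeFinset, G.degree (f e) :=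
    Finset.sum_le_sum hmin
  have step2 : ∑ v ∈ G.edgeFinset.image f, G.degree v
      = ∑ e ∈ G.edgeFinset, G.degree (f e) := Finset.sum_image hinj
  have hsub : G.edgeFinset.image f ⊆ Finset.univ.erase r := by
    intro v hv
    obtain ⟨e, he, rfl⟩ := Finset.mem_image.mp hv
    exact Finset.mem_erase.mpr ⟨hne e he, Finset.mem_univ _⟩
  have step3 : ∑ v ∈ G.edgeFinset.image f, G.degree v
      ≤ ∑ v ∈ Finset.univ.erase r, G.degree v := Finset.sum_le_sum_of_subset hsub
  have htot : ∑ v ∈ Finset.univ.erase r, G.degree v + G.degree r = ∑ v, G.degree v :=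
    Finset.sum_erase_add _ _ (Finset.mem_univ r)
  have hdeg : ∑ v, G.degree v = 2 * G.edgeFinset.card := G.sum_degrees_eq_twice_card_edges
  have hcard : G.edgeFinset.card + 1 = Fintype.card V := hG.card_edgeFinset
  have hmain : ∑ e ∈ G.edgeFinset, minDeg G e + G.maxDegree ≤ 2 * (n - 1) := by
    rw [hr]
    omega
  have hcast : (∑ e ∈ G.edgeFinset, (minDeg G e : ℤ))
      = ((∑ e ∈ G.edgeFinset, minDeg G e : ℕ) : ℤ) := by push_cast; rfl
  constructor
  · rw [hcast]
    have := hmain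
    push_cast
    omega
  · intro h3
    have hΔ : 2 ≤ G.maxDegree := by
      by_contra hcon
      push_neg at hcon
      have hb : ∑ v, G.degree v ≤ ∑ _v : V, 1 :=
        Finset.sum_le_sum (fun v _ => by
          have h1 := G.degree_le_maxDegree v
          omega)
      simp only [Finset.sum_const, Finset.card_univ, smul_eq_mul, mul_one] at hb
      omega
    rw [hcast]
    push_cast
    omega
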